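/- Let d ≥ 1, let C : ℝ^d → ℝ be continuous with 0 < C(0) and |C(x)| ≤ C(0) for all x, and let ℓ_C > 0 be such that C(x) > 0 whenever |x|_∞ ≤ ℓ_C/2. Then the Wegner constant W(E) satisfies lim_{E → −∞} (ln W(E))/E² = −1/(2 C(0)). -/

import Mathlib

open MeasureTheory Real

/-- The length `ℓ_E := min{|E|^{-1/2}, ℓ_C}`. -/
noncomputable def ellE (ℓC E : ℝ) : ℝ := min (|E| ^ (-(1 : ℝ) / 2)) ℓC

/-- `b_E := inf{C(x)/C(0) : |x|_∞ < ℓ_E/2}`. -/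
noncomputable def bE (d : ℕ) (C : (Fin d → ℝ) → ℝ) (ℓC E : ℝ) : ℝ :=
  sInf {r : ℝ | ∃ x : Fin d → ℝ, ‖x‖ < ellE ℓC E / 2 ∧ r = C x / C 0}

/-- `C_E := C(0)(2 - b_E²)`. -/
noncomputable def CE (d : ℕ) (C : (Fin d → ℝ) → ℝ) (ℓC E : ℝ) : ℝ :=
  C 0 * (2 - (bE d C ℓC E) ^ 2)

/-- `t_E := (2C_E)^{-1}(-E + √(E² + 2C_E/π))`. -/
noncomputable def tE (d : ℕ) (C : (Fin d → ℝ) → ℝ) (ℓC E : ℝ) : ℝ :=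
  (2 * CE d C ℓC E)⁻¹ * (-E + Real.sqrt (E ^ 2 + 2 * CE d C ℓC E / Real.pi))

/-- The Wegner constant
`W(E) := exp(t_E E + t_E² C_E/2)/(√(2π C(0)) b_E) · (2/ℓ_E + (2π t_E)^{-1/2})^d`. -/
noncomputable def wegnerW (d : ℕ) (C : (Fin d → ℝ) → ℝ) (ℓC E : ℝ) : ℝ :=
  Real.exp (tE d C ℓC E * E + (tE d C ℓC E) ^ 2 * CE d C ℓC E / 2) /
      (Real.sqrt (2 * Real.pi * C 0) * bE d C ℓC E) *
    (2 / ellE ℓC E + (2 * Real.pi * tE d C ℓC E) ^ (-(1 : ℝ) / 2)) ^ d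

open Filter


lemma rpow_neg_half (x : ℝ) (hx : 0 ≤ x) : x ^ (-(1:ℝ)/2) = (Real.sqrt x)⁻¹ := by
  rw [neg_div, Real.rpow_neg hx, ← Real.sqrt_eq_rpow]

lemma ellE_pos' (ℓC E : ℝ) (hℓC : 0 < ℓC) (hE : E ≠ 0) : 0 < ellE ℓC E :=
  lt_min (Real.rpow_pos_of_pos (abs_pos.mpr hE) _) hℓC

section
variable (d : ℕ) (C : (Fin d → ℝ) → ℝ) (ℓC E : ℝ)

lemma bE_set_nonempty (hℓC : 0 < ℓC) (hE : E ≠ 0) (hC0 : C 0 ≠ 0) :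
    Set.Nonempty {r : ℝ | ∃ x : Fin d → ℝ, ‖x‖ < ellE ℓC E / 2 ∧ r = C x / C 0} := by
  refine ⟨1, 0, ?_, ?_⟩
  · simpa using half_pos (ellE_pos' ℓC E hℓC hE)
  · rw [div_self hC0]

lemma bE_set_bddBelow (hC0pos : 0 < C 0) (hCbd : ∀ x, |C x| ≤ C 0) :
    ∀ r ∈ {r : ℝ | ∃ x : Fin d → ℝ, ‖x‖ < ellE ℓC E / 2 ∧ r = C x / C 0}, (-1 : ℝ) ≤ r := by
  rintro r ⟨x, -, rfl⟩
  rw [le_div_iff₀ hC0pos]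
  have := (abs_le.mp (hCbd x)).1
  linarith

lemma bE_le_one (hℓC : 0 < ℓC) (hE : E ≠ 0) (hC0pos : 0 < C 0) (hCbd : ∀ x, |C x| ≤ C 0) :
    bE d C ℓC E ≤ 1 := by
  refine csInf_le ⟨-1, fun r hr => bE_set_bddBelow d C ℓC E hC0pos hCbd r hr⟩ ?_
  exact ⟨0, by simpa using half_pos (ellE_pos' ℓC E hℓC hE), (div_self hC0pos.ne').symm⟩

lemma neg_one_le_bE (hℓC : 0 < ℓC) (hE : E ≠ 0) (hC0pos : 0 < C 0) (hCbd : ∀ x, |C x| ≤ C 0) :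
    (-1 : ℝ) ≤ bE d C ℓC E :=
  le_csInf (bE_set_nonempty d C ℓC E hℓC hE hC0pos.ne') (bE_set_bddBelow d C ℓC E hC0pos hCbd)

lemma CE_bounds (hℓC : 0 < ℓC) (hE : E ≠ 0) (hC0pos : 0 < C 0) (hCbd : ∀ x, |C x| ≤ C 0) :
    C 0 ≤ CE d C ℓC E ∧ CE d C ℓC E ≤ 2 * C 0 := by
  have h1 := bE_le_one d C ℓC E hℓC hE hC0pos hCbd
  have h2 := neg_one_le_bE d C ℓC E hℓC hE hC0pos hCbd
  have hsq : (bE d C ℓC E) ^ 2 ≤ 1 := by nlinarith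
  have hsq0 : 0 ≤ (bE d C ℓC E) ^ 2 := sq_nonneg _
  unfold CE
  constructor <;> nlinarith

end

lemma bE_tendsto_one (d : ℕ) (C : (Fin d → ℝ) → ℝ) (hC : Continuous C)
    (hC0pos : 0 < C 0) (hCbd : ∀ x, |C x| ≤ C 0) (ℓC : ℝ) (hℓC : 0 < ℓC) :
    Tendsto (fun E => bE d C ℓC E) atBot (nhds 1) := by
  rw [Metric.tendsto_nhds]
  intro ε hε
  have hcont := Metric.continuousAt_iff.mp (hC.continuousAt (x := 0))
  obtain ⟨δ, hδpos, hδ⟩ := hcont (ε / 2 * C 0) (by positivity)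
  refine Filter.eventually_atBot.mpr ⟨min (-1) (-(δ⁻¹ ^ 2 + 1)), fun E hE => ?_⟩
  have hE1 : E ≤ -1 := hE.trans (min_le_left _ _)
  have hE2 : E ≤ -(δ⁻¹ ^ 2 + 1) := hE.trans (min_le_right _ _)
  have hEneg : E < 0 := by linarith
  have hEabs : δ⁻¹ ^ 2 ≤ |E| := by rw [abs_of_neg hEneg]; linarith
  have hsqrt : δ⁻¹ ≤ Real.sqrt |E| := by
    have := Real.sqrt_le_sqrt hEabs
    rwa [Real.sqrt_sq (by positivity)] at this
  have hinv : |E| ^ (-(1:ℝ)/2) ≤ δ := by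
    rw [rpow_neg_half |E| (abs_nonneg E)]
    calc (Real.sqrt |E|)⁻¹ ≤ (δ⁻¹)⁻¹ := by
          apply inv_anti₀ (by positivity) hsqrt
      _ = δ := inv_inv δ
  have hell : ellE ℓC E ≤ δ := (min_le_left _ _).trans hinv
  have hellpos : 0 < ellE ℓC E := ellE_pos' ℓC E hℓC hEneg.ne
  have hb_lb : 1 - ε / 2 ≤ bE d C ℓC E := by
    refine le_csInf (bE_set_nonempty d C ℓC E hℓC hEneg.ne hC0pos.ne') ?_
    rintro r ⟨x, hx, rfl⟩
    have hxδ : dist x 0 < δ := by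
      rw [dist_zero_right]
      calc ‖x‖ < ellE ℓC E / 2 := hx
        _ ≤ ellE ℓC E := by linarith
        _ ≤ δ := hell
    have := abs_lt.mp (by simpa [Real.dist_eq] using hδ hxδ)
    rw [le_div_iff₀ hC0pos]
    nlinarith
  have hb_ub := bE_le_one d C ℓC E hℓC hEneg.ne hC0pos hCbd
  rw [Real.dist_eq]
  refine abs_lt.mpr ⟨by linarith, by linarith⟩

set_option maxHeartbeats 1000000 in
/-- Low-energy asymptotics of the Wegner constant:
`lim_{E → -∞} ln W(E)/E² = -1/(2C(0))`. -/
theorem wegner_constant_low_energy_asymptotics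
    (d : ℕ) (hd : 1 ≤ d) (C : (Fin d → ℝ) → ℝ) (hC : Continuous C)
    (hC0pos : 0 < C 0) (hCbd : ∀ x, |C x| ≤ C 0)
    (ℓC : ℝ) (hℓC : 0 < ℓC)
    (hCpos : ∀ x : Fin d → ℝ, ‖x‖ ≤ ℓC / 2 → 0 < C x) :
    Filter.Tendsto (fun E : ℝ => Real.log (wegnerW d C ℓC E) / E ^ 2)
      Filter.atBot (nhds (-1 / (2 * C 0))) := by
  have hπ := Real.pi_pos
  have hb1 := bE_tendsto_one d C hC hC0pos hCbd ℓC hℓC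
  have hE2top : Filter.Tendsto (fun E : ℝ => E ^ 2) Filter.atBot Filter.atTop := by
    have h : Filter.Tendsto (fun E : ℝ => |E| ^ 2) Filter.atBot Filter.atTop :=
      (tendsto_pow_atTop two_ne_zero).comp (tendsto_abs_atBot_atTop (G := ℝ))
    exact h.congr fun x => sq_abs x
  -- CE tends to C 0
  have ha : Filter.Tendsto (fun E => CE d C ℓC E) Filter.atBot (nhds (C 0)) := by
    have h : Filter.Tendsto (fun E => C 0 * (2 - (bE d C ℓC E) ^ 2)) Filter.atBot
        (nhds (C 0 * (2 - 1 ^ 2))) :=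
      tendsto_const_nhds.mul (tendsto_const_nhds.sub (hb1.pow 2))
    have h2 : C 0 * (2 - 1 ^ 2) = C 0 := by norm_num
    rw [h2] at h
    exact h
  -- eventual bounds on CE
  have haev : ∀ᶠ E : ℝ in Filter.atBot,
      C 0 ≤ CE d C ℓC E ∧ CE d C ℓC E ≤ 2 * C 0 := by
    filter_upwards [Filter.eventually_le_atBot (-1 : ℝ)] with E hE
    exact CE_bounds d C ℓC E hℓC (by intro h; rw [h] at hE; linarith) hC0pos hCbd
  -- ratio r E = sqrt(E² + 2 CE/π)/(-E) tends to 1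
  have hq : Filter.Tendsto
      (fun E : ℝ => (2 * CE d C ℓC E / Real.pi) / E ^ 2) Filter.atBot (nhds 0) := by
    apply squeeze_zero' ?_ ?_
      ((tendsto_const_nhds (x := 4 * C 0 / Real.pi)).div_atTop hE2top)
    · filter_upwards [haev, Filter.eventually_le_atBot (-1 : ℝ)] with E hCE hE
      have h2 : 0 < CE d C ℓC E := lt_of_lt_of_le hC0pos hCE.1
      exact div_nonneg (div_nonneg (by linarith) hπ.le) (sq_nonneg E)
    · filter_upwards [haev, Filter.eventually_le_atBot (-1 : ℝ)] with E hCE hE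
      have hEsq : (0:ℝ) < E ^ 2 := by nlinarith
      rw [div_le_div_iff_of_pos_right hEsq, div_le_div_iff_of_pos_right hπ]
      linarith [hCE.2]
  have hr : Filter.Tendsto
      (fun E : ℝ => Real.sqrt (E ^ 2 + 2 * CE d C ℓC E / Real.pi) / (-E))
      Filter.atBot (nhds 1) := by
    have h1 : Filter.Tendsto
        (fun E : ℝ => Real.sqrt (1 + (2 * CE d C ℓC E / Real.pi) / E ^ 2))
        Filter.atBot (nhds 1) := by
      have := ((tendsto_const_nhds (x := (1:ℝ))).add hq).sqrt
      simpa using this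
    refine h1.congr' ?_
    filter_upwards [haev, Filter.eventually_le_atBot (-1 : ℝ)] with E hCE hE
    have hEneg : E < 0 := by linarith
    have hEsq : (0:ℝ) < E ^ 2 := by nlinarith
    have hnum : (0:ℝ) ≤ E ^ 2 + 2 * CE d C ℓC E / Real.pi := by
      have : 0 < CE d C ℓC E := lt_of_lt_of_le hC0pos hCE.1
      positivity
    have hsq : Real.sqrt (E ^ 2) = -E := by
      rw [Real.sqrt_sq_eq_abs, abs_of_neg hEneg]
    have harg : 1 + (2 * CE d C ℓC E / Real.pi) / E ^ 2
        = (E ^ 2 + 2 * CE d C ℓC E / Real.pi) / E ^ 2 := by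
      rw [add_div, div_self hEsq.ne']
    rw [harg, Real.sqrt_div hnum, hsq]
  -- main exponential term
  have hmain : Filter.Tendsto
      (fun E : ℝ => (tE d C ℓC E * E + (tE d C ℓC E) ^ 2 * CE d C ℓC E / 2) / E ^ 2)
      Filter.atBot (nhds (-1 / (2 * C 0))) := by
    have hlim : Filter.Tendsto
        (fun E : ℝ => (1 + Real.sqrt (E ^ 2 + 2 * CE d C ℓC E / Real.pi) / (-E)) *
          (Real.sqrt (E ^ 2 + 2 * CE d C ℓC E / Real.pi) / (-E) - 3) / (8 * CE d C ℓC E))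
        Filter.atBot (nhds ((1 + 1) * (1 - 3) / (8 * C 0))) :=
      ((tendsto_const_nhds.add hr).mul (hr.sub tendsto_const_nhds)).div
        (tendsto_const_nhds.mul ha) (by positivity)
    have hval : (1 + 1) * (1 - 3) / (8 * C 0) = -1 / (2 * C 0) := by
      rw [div_eq_div_iff (by positivity) (by positivity)]; ring
    rw [hval] at hlim
    refine hlim.congr' ?_
    filter_upwards [haev, Filter.eventually_le_atBot (-1 : ℝ)] with E hCE hE
    have hEneg : E < 0 := by linarith
    have hEne : E ≠ 0 := hEneg.ne
    have hane : CE d C ℓC E ≠ 0 := (lt_of_lt_of_le hC0pos hCE.1).ne'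
    have hnegEne : -E ≠ 0 := by simpa using hEne
    set u := Real.sqrt (E ^ 2 + 2 * CE d C ℓC E / Real.pi) with hu
    have hur : u = u / (-E) * (-E) := (div_mul_cancel₀ u hnegEne).symm
    simp only [tE]
    rw [← hu]
    set r := u / (-E) with hrdef
    rw [hur]
    field_simp [hane, hEne]
    ring
  -- the logarithmic factor term
  have htlb : ∀ᶠ E : ℝ in Filter.atBot,
      1 ≤ 2 * Real.pi * tE d C ℓC E := by
    filter_upwards [haev, Filter.eventually_le_atBot (min (-1 : ℝ) (-(2 * C 0 / Real.pi)))]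
      with E hCE hE
    have hE1 : E ≤ -1 := hE.trans (min_le_left _ _)
    have hE2 : E ≤ -(2 * C 0 / Real.pi) := hE.trans (min_le_right _ _)
    have hapos : 0 < CE d C ℓC E := lt_of_lt_of_le hC0pos hCE.1
    have husqnn : 0 ≤ Real.sqrt (E ^ 2 + 2 * CE d C ℓC E / Real.pi) := Real.sqrt_nonneg _
    have ht : (-E) / (2 * CE d C ℓC E) ≤ tE d C ℓC E := by
      simp only [tE]
      rw [div_eq_inv_mul]
      have h2a : (0:ℝ) < 2 * CE d C ℓC E := by positivity
      have := inv_pos.mpr h2a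
      nlinarith
    have ht2 : (-E) / (4 * C 0) ≤ (-E) / (2 * CE d C ℓC E) := by
      apply div_le_div_of_nonneg_left (by linarith) (by positivity) (by linarith [hCE.2])
    have hfrac : 1 / (2 * Real.pi) ≤ (-E) / (4 * C 0) := by
      rw [div_le_div_iff₀ (by positivity) (by positivity)]
      have : 2 * C 0 / Real.pi ≤ -E := by linarith
      rw [div_le_iff₀ hπ] at this
      nlinarith
    have : 1 / (2 * Real.pi) ≤ tE d C ℓC E := le_trans hfrac (le_trans ht2 ht)
    rw [div_le_iff₀ (by positivity)] at this
    linarith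
  have hAbounds : ∀ᶠ E : ℝ in Filter.atBot,
      (1 : ℝ) ≤ 2 / ellE ℓC E + (2 * Real.pi * tE d C ℓC E) ^ (-(1:ℝ)/2) ∧
      2 / ellE ℓC E + (2 * Real.pi * tE d C ℓC E) ^ (-(1:ℝ)/2) ≤ 2 * (-E) + 1 := by
    filter_upwards [htlb, Filter.eventually_le_atBot (min (-1 : ℝ) (-(ℓC⁻¹ ^ 2)))]
      with E htl hE
    have hE1 : E ≤ -1 := hE.trans (min_le_left _ _)
    have hEneg : E < 0 := by linarith
    have hEabs : 1 ≤ |E| := by rw [abs_of_neg hEneg]; linarith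
    have hEabs2 : ℓC⁻¹ ^ 2 ≤ |E| := by
      rw [abs_of_neg hEneg]; have := hE.trans (min_le_right _ _); linarith
    have hsqrt1 : 1 ≤ Real.sqrt |E| := by
      rw [show (1:ℝ) = Real.sqrt 1 from Real.sqrt_one.symm]
      exact Real.sqrt_le_sqrt hEabs
    have hsqrtl : ℓC⁻¹ ≤ Real.sqrt |E| := by
      have := Real.sqrt_le_sqrt hEabs2
      rwa [Real.sqrt_sq (by positivity)] at this
    have hellrpow : |E| ^ (-(1:ℝ)/2) ≤ ℓC := by
      rw [rpow_neg_half |E| (abs_nonneg E)]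
      calc (Real.sqrt |E|)⁻¹ ≤ (ℓC⁻¹)⁻¹ := inv_anti₀ (by positivity) hsqrtl
        _ = ℓC := inv_inv ℓC
    have helleq : ellE ℓC E = (Real.sqrt |E|)⁻¹ := by
      rw [ellE, min_eq_left hellrpow, rpow_neg_half |E| (abs_nonneg E)]
    have h2ell : 2 / ellE ℓC E = 2 * Real.sqrt |E| := by
      rw [helleq, div_eq_mul_inv, inv_inv]
    have hsle : Real.sqrt |E| ≤ -E := by
      have h : Real.sqrt |E| ≤ |E| := by
        nlinarith [Real.sq_sqrt (abs_nonneg E), Real.sqrt_nonneg |E|]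
      calc Real.sqrt |E| ≤ |E| := h
        _ = -E := abs_of_neg hEneg
    have hsnn : (0:ℝ) < 2 * Real.pi * tE d C ℓC E := by linarith
    have hrle1 : (2 * Real.pi * tE d C ℓC E) ^ (-(1:ℝ)/2) ≤ 1 := by
      rw [rpow_neg_half _ hsnn.le]
      have h1 : 1 ≤ Real.sqrt (2 * Real.pi * tE d C ℓC E) := by
        rw [show (1:ℝ) = Real.sqrt 1 from Real.sqrt_one.symm]
        exact Real.sqrt_le_sqrt htl
      calc (Real.sqrt (2 * Real.pi * tE d C ℓC E))⁻¹ ≤ 1⁻¹ := inv_anti₀ one_pos h1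
        _ = 1 := inv_one
    have hrnn : 0 ≤ (2 * Real.pi * tE d C ℓC E) ^ (-(1:ℝ)/2) :=
      Real.rpow_nonneg hsnn.le _
    constructor
    · rw [h2ell]; nlinarith
    · rw [h2ell]; nlinarith
  have hlogA : Filter.Tendsto
      (fun E : ℝ => (d : ℝ) * Real.log
        (2 / ellE ℓC E + (2 * Real.pi * tE d C ℓC E) ^ (-(1:ℝ)/2)) / E ^ 2)
      Filter.atBot (nhds 0) := by
    have hng : Filter.Tendsto (fun E : ℝ => (d : ℝ) * (2 * (-E)) / E ^ 2)
        Filter.atBot (nhds 0) := by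
      have h0 : Filter.Tendsto (fun E : ℝ => ((d : ℝ) * 2) * (-E)⁻¹)
          Filter.atBot (nhds 0) := by
        have hneg : Filter.Tendsto (fun E : ℝ => -E) Filter.atBot Filter.atTop :=
          tendsto_neg_atBot_atTop
        have h := hneg.inv_tendsto_atTop
        simpa using (tendsto_const_nhds (x := (d : ℝ) * 2)).mul h
      refine h0.congr' ?_
      filter_upwards [Filter.eventually_le_atBot (-1 : ℝ)] with E hE
      have hEne : E ≠ 0 := by intro h; rw [h] at hE; linarith
      rw [inv_neg]
      field_simp
    apply squeeze_zero' ?_ ?_ hng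
    · filter_upwards [hAbounds] with E hA
      have hlognn := Real.log_nonneg hA.1
      positivity
    · filter_upwards [hAbounds, Filter.eventually_le_atBot (-1 : ℝ)] with E hA hE
      have hApos : (0:ℝ) < 2 / ellE ℓC E + (2 * Real.pi * tE d C ℓC E) ^ (-(1:ℝ)/2) := by
        linarith [hA.1]
      have hlog := Real.log_le_sub_one_of_pos hApos
      have hlog2 : Real.log (2 / ellE ℓC E + (2 * Real.pi * tE d C ℓC E) ^ (-(1:ℝ)/2))
          ≤ 2 * (-E) := by linarith [hA.2]
      have hEsq : (0:ℝ) < E ^ 2 := by nlinarith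
      rw [div_le_div_iff_of_pos_right hEsq]
      exact mul_le_mul_of_nonneg_left hlog2 (Nat.cast_nonneg d)
  -- the middle constant term
  have hbpos : ∀ᶠ E : ℝ in Filter.atBot, 1/2 < bE d C ℓC E :=
    hb1.eventually (eventually_gt_nhds (by norm_num))
  have hmid : Filter.Tendsto
      (fun E : ℝ => -Real.log (Real.sqrt (2 * Real.pi * C 0) * bE d C ℓC E) / E ^ 2)
      Filter.atBot (nhds 0) := by
    have hD : Filter.Tendsto (fun E => Real.sqrt (2 * Real.pi * C 0) * bE d C ℓC E)
        Filter.atBot (nhds (Real.sqrt (2 * Real.pi * C 0) * 1)) :=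
      tendsto_const_nhds.mul hb1
    have hne : Real.sqrt (2 * Real.pi * C 0) * 1 ≠ 0 := by
      rw [mul_one]
      exact (Real.sqrt_pos.mpr (by positivity)).ne'
    exact ((hD.log hne).neg).div_atTop hE2top
  -- assemble
  have hsum := (hmain.add hmid).add hlogA
  rw [add_zero, add_zero] at hsum
  refine hsum.congr' ?_
  filter_upwards [hAbounds, hbpos, htlb, Filter.eventually_le_atBot (-1 : ℝ)]
    with E hA hb htl hE
  have hApos : (0:ℝ) < 2 / ellE ℓC E + (2 * Real.pi * tE d C ℓC E) ^ (-(1:ℝ)/2) := by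
    linarith [hA.1]
  have hDpos : 0 < Real.sqrt (2 * Real.pi * C 0) * bE d C ℓC E := by
    have := Real.sqrt_pos.mpr (show (0:ℝ) < 2 * Real.pi * C 0 by positivity)
    nlinarith
  have hlogW : Real.log (wegnerW d C ℓC E) =
      (tE d C ℓC E * E + (tE d C ℓC E) ^ 2 * CE d C ℓC E / 2)
      + (-Real.log (Real.sqrt (2 * Real.pi * C 0) * bE d C ℓC E))
      + (d : ℝ) * Real.log (2 / ellE ℓC E + (2 * Real.pi * tE d C ℓC E) ^ (-(1:ℝ)/2)) := by
    rw [wegnerW, Real.log_mul (div_ne_zero (Real.exp_ne_zero _) hDpos.ne') (pow_ne_zero d hApos.ne'),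
      Real.log_div (Real.exp_ne_zero _) hDpos.ne', Real.log_exp, Real.log_pow]
    ring
  rw [hlogW]
  ring
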